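/- (Sphere-packing bound for constant weight codes) Let C be a family of k-subsets of an n-set such that any two distinct members have symmetric difference at least 2(2t+1) (i.e., minimum Johnson distance greater than 4t). Then |C| ≤ C(n,k) / (Σ_{i=0}^{t} C(k,i)·C(n−k,i)), provided t ≤ k and t ≤ n−k. -/

import Mathlib

open Finset

section Aux
variable {α : Type*} [DecidableEq α]

lemma aux_sdiff1 (s A B : Finset α) (hA : A ⊆ s) (hB : ∀ a ∈ B, a ∉ s) :
    s \ ((s \ A) ∪ B) = A := by
  ext a
  simp only [mem_sdiff, mem_union, not_or, not_and, not_not]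
  constructor
  · rintro ⟨hs, h1, _⟩; exact h1 hs
  · intro ha; exact ⟨hA ha, fun _ => ha, fun hb => hB a hb (hA ha)⟩

lemma aux_sdiff2 (s A B : Finset α) (hB : ∀ a ∈ B, a ∉ s) :
    ((s \ A) ∪ B) \ s = B := by
  ext a
  simp only [mem_sdiff, mem_union]
  constructor
  · rintro ⟨h1 | h1, h2⟩
    · exact absurd h1.1 h2
    · exact h1
  · intro hb; exact ⟨Or.inr hb, hB a hb⟩

lemma aux_symmDiff_card (s A B : Finset α) (hA : A ⊆ s) (hB : ∀ a ∈ B, a ∉ s) :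
    (symmDiff s ((s \ A) ∪ B)).card = A.card + B.card := by
  rw [symmDiff_def]
  have h1 := aux_sdiff1 s A B hA hB
  have h2 := aux_sdiff2 s A B hB
  have : s \ ((s \ A) ∪ B) ⊔ ((s \ A) ∪ B) \ s = A ∪ B := by
    rw [h1, h2]; rfl
  rw [this, card_union_of_disjoint]
  rw [disjoint_left]
  intro a ha hb
  exact hB a hb (hA ha)

lemma ball_card_lower (P : Finset α) (n k t : ℕ) (hP : P.card = n)
    (s : Finset α) (hs : s ⊆ P) (hsk : s.card = k) (htk : t ≤ k) (htnk : t ≤ n - k) :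
    ∑ i ∈ Finset.range (t + 1), k.choose i * (n - k).choose i ≤
      ((P.powersetCard k).filter (fun x => (symmDiff s x).card ≤ 2 * t)).card := by
  classical
  have hPs : (P \ s).card = n - k := by rw [card_sdiff_of_subset hs, hP, hsk]
  set f : Finset α × Finset α → Finset α := fun p => (s \ p.1) ∪ p.2 with hf
  set g : ℕ → Finset (Finset α) :=
    fun i => ((s.powersetCard i) ×ˢ ((P \ s).powersetCard i)).image f with hg
  -- basic facts about members of g i
  have hmem : ∀ i, ∀ x ∈ g i, x ∈ P.powersetCard k ∧ (symmDiff s x).card = 2 * i := by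
    intro i x hx
    simp only [hg, mem_image, mem_product, mem_powersetCard] at hx
    obtain ⟨⟨A, B⟩, ⟨⟨hA, hAc⟩, ⟨hB, hBc⟩⟩, rfl⟩ := hx
    have hB' : ∀ a ∈ B, a ∉ s := fun a ha => (mem_sdiff.1 (hB ha)).2
    have hdisj : Disjoint (s \ A) B := by
      rw [disjoint_right]; intro a ha; exact fun h => hB' a ha (mem_sdiff.1 h).1
    have hiA : A.card ≤ s.card := card_le_card hA
    constructor
    · rw [mem_powersetCard]
      constructor
      · apply union_subset (sdiff_subset.trans hs)
        exact hB.trans sdiff_subset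
      · rw [card_union_of_disjoint hdisj, card_sdiff_of_subset hA, hsk, hAc, hBc]
        have : i ≤ k := by rw [← hAc, ← hsk]; exact hiA
        omega
    · rw [aux_symmDiff_card s A B hA hB', hAc, hBc]; omega
  have hsub' : ∀ i ∈ Finset.range (t + 1),
      g i ⊆ (P.powersetCard k).filter (fun x => (symmDiff s x).card ≤ 2 * t) := by
    intro i hi x hx
    obtain ⟨h1, h2⟩ := hmem i x hx
    rw [mem_filter]
    refine ⟨h1, ?_⟩
    rw [h2]
    simp only [mem_range] at hi
    omega
  have hdisj : ((Finset.range (t + 1) : Finset ℕ) : Set ℕ).PairwiseDisjoint g := by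
    intro i _ j _ hij
    simp only [Function.onFun]
    rw [Finset.disjoint_left]
    intro x hxi hxj
    have := (hmem i x hxi).2
    have := (hmem j x hxj).2
    omega
  have hcard : ∀ i ∈ Finset.range (t + 1), (g i).card = k.choose i * (n - k).choose i := by
    intro i _
    rw [hg]
    rw [Finset.card_image_of_injOn]
    · rw [card_product, card_powersetCard, card_powersetCard, hsk, hPs]
    · rintro ⟨A, B⟩ hAB ⟨A', B'⟩ hAB' heq
      simp only [mem_coe, mem_product, mem_powersetCard] at hAB hAB'
      have hB' : ∀ a ∈ B, a ∉ s := fun a ha => (mem_sdiff.1 (hAB.2.1 ha)).2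
      have hB'' : ∀ a ∈ B', a ∉ s := fun a ha => (mem_sdiff.1 (hAB'.2.1 ha)).2
      simp only [hf] at heq
      have e1 : A = A' := by
        have := aux_sdiff1 s A B hAB.1.1 hB'
        have := aux_sdiff1 s A' B' hAB'.1.1 hB''
        rw [← aux_sdiff1 s A B hAB.1.1 hB', ← aux_sdiff1 s A' B' hAB'.1.1 hB'', heq]
      have e2 : B = B' := by
        rw [← aux_sdiff2 s A B hB', ← aux_sdiff2 s A' B' hB'', heq]
      rw [e1, e2]
  calc ∑ i ∈ Finset.range (t + 1), k.choose i * (n - k).choose i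
      = ∑ i ∈ Finset.range (t + 1), (g i).card := by
        exact (Finset.sum_congr rfl hcard).symm
    _ = ((Finset.range (t + 1)).biUnion g).card := (Finset.card_biUnion
        (fun i hi j hj hij => hdisj (by simpa using hi) (by simpa using hj) hij)).symm
    _ ≤ _ := card_le_card (by
        intro x hx
        rw [Finset.mem_biUnion] at hx
        obtain ⟨i, hi, hxi⟩ := hx
        exact hsub' i hi hxi)

end Aux

/-- Sphere-packing bound for constant weight codes: if any two distinct codewords (k-subsets
of an n-set) have symmetric difference at least `2(2t+1)`, then
`|C| ≤ C(n,k) / (∑_{i=0}^t C(k,i) C(n-k,i))`. -/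
theorem sphere_packing_bound {α : Type*} [DecidableEq α] (P : Finset α) (n k t : ℕ)
    (hP : P.card = n) (C : Finset (Finset α))
    (hsub : ∀ s ∈ C, s ⊆ P) (hk : ∀ s ∈ C, s.card = k)
    (hd : ∀ s ∈ C, ∀ s' ∈ C, s ≠ s' → 2 * (2 * t + 1) ≤ (symmDiff s s').card)
    (htk : t ≤ k) (htnk : t ≤ n - k) :
    C.card ≤ n.choose k / ∑ i ∈ Finset.range (t + 1), k.choose i * (n - k).choose i := by
  classical
  set S := ∑ i ∈ Finset.range (t + 1), k.choose i * (n - k).choose i with hS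
  have hSpos : 0 < S := by
    have h0 : (0 : ℕ) ∈ Finset.range (t + 1) := by simp
    have := Finset.single_le_sum (f := fun i => k.choose i * (n - k).choose i)
      (fun i _ => Nat.zero_le _) h0
    have h1 : 1 ≤ S := by simpa using this.trans_eq hS.symm |>.trans_eq rfl
    exact h1
  set ball : Finset α → Finset (Finset α) :=
    fun s => (P.powersetCard k).filter (fun x => (symmDiff s x).card ≤ 2 * t) with hball
  have hdisj : ∀ s ∈ C, ∀ s' ∈ C, s ≠ s' → Disjoint (ball s) (ball s') := by
    intro s hs s' hs' hne
    rw [Finset.disjoint_left]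
    intro x hx hx'
    rw [hball, mem_filter] at hx hx'
    have htri : (symmDiff s s').card ≤ (symmDiff s x).card + (symmDiff x s').card := by
      calc (symmDiff s s').card ≤ (symmDiff s x ⊔ symmDiff x s').card :=
            card_le_card (symmDiff_triangle s x s')
        _ ≤ _ := card_union_le _ _
    have := hd s hs s' hs' hne
    rw [symmDiff_comm] at hx'
    omega
  rw [Nat.le_div_iff_mul_le hSpos]
  calc C.card * S = ∑ _s ∈ C, S := by rw [Finset.sum_const, smul_eq_mul, mul_comm]
    _ ≤ ∑ s ∈ C, (ball s).card := Finset.sum_le_sum (fun s hs =>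
        ball_card_lower P n k t hP s (hsub s hs) (hk s hs) htk htnk)
    _ = (C.biUnion ball).card := (Finset.card_biUnion hdisj).symm
    _ ≤ (P.powersetCard k).card := card_le_card (by
        intro x hx
        rw [Finset.mem_biUnion] at hx
        obtain ⟨s, hs, hxs⟩ := hx
        exact (mem_filter.1 hxs).1)
    _ = n.choose k := by rw [card_powersetCard, hP]
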